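/- arXiv:1910.01771 — 2 statements merged into one kernel-verified Lean document; each statement's English description precedes it below -/
import Mathlib

section
/- Let λ∈ℂ with λ∉{2,5,6}. If f:{x1,x2,x3,x4,y0,y1,…,y6}→ℂ satisfies the eigenvalue equations −Δf(y_i)=λ f(y_i) for all 0≤i≤6, then −Δ_{(−1)}f(y0)=R(λ) f(y0), where R(λ)=λ(5−λ). -/
noncomputable section

namespace SGpaper

/-- The eleven vertices of the graph `Γ`. -/
inductive GammaV : Type
  | x1 | x2 | x3 | x4 | y0 | y1 | y2 | y3 | y4 | y5 | y6
  deriving DecidableEq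

instance instFintypeGammaV : Fintype GammaV where
  elems := {GammaV.x1, GammaV.x2, GammaV.x3, GammaV.x4, GammaV.y0, GammaV.y1, GammaV.y2,
    GammaV.y3, GammaV.y4, GammaV.y5, GammaV.y6}
  complete := by intro x; cases x <;> decide

open GammaV

/-- The six small triangles (cells) of `Γ`. -/
def cells : List (List GammaV) :=
  [[x1, y1, y5], [y1, y0, y4], [y5, y4, x4], [y0, y2, y3], [y2, x2, y6], [y3, y6, x3]]

/-- Adjacency in `Γ`: two distinct vertices lying in a common small triangle. -/
def adjG (a b : GammaV) : Prop :=
  a ≠ b ∧ ∃ c ∈ cells, a ∈ c ∧ b ∈ c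

instance : DecidableRel adjG := fun _ _ => by unfold adjG; infer_instance

/-- The graph Laplacian on `Γ`: `Δf(v) = Σ_{z ∼ v} f(z) - 4 f(v)`. -/
def laplG (f : GammaV → ℂ) (v : GammaV) : ℂ :=
  (∑ z ∈ Finset.univ.filter (fun z => adjG v z), f z) - 4 * f v

/-- The coarse Laplacian at `y₀`: `Δ_{(-1)}f(y₀) = f(x₁)+f(x₂)+f(x₃)+f(x₄) - 4 f(y₀)`. -/
def laplG1 (f : GammaV → ℂ) : ℂ :=
  f x1 + f x2 + f x3 + f x4 - 4 * f y0

/-- The list `y₀, y₁, …, y₆`. -/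
def yv : Fin 7 → GammaV
  | 0 => y0 | 1 => y1 | 2 => y2 | 3 => y3 | 4 => y4 | 5 => y5 | 6 => y6

/-- The list `x₁, …, x₄`. -/
def xv : Fin 4 → GammaV
  | 0 => x1 | 1 => x2 | 2 => x3 | 3 => x4

/-- The spectral decimation polynomial `R(λ) = λ(5-λ)`. -/
def R : ℂ → ℂ := fun z => z * (5 - z)

open GammaV in
/-- Spectral decimation, forward direction. If `λ ∉ {2,5,6}` and
`f : Γ → ℂ` satisfies `-Δf(yᵢ) = λ f(yᵢ)` for all `0 ≤ i ≤ 6`, then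
`-Δ_{(-1)}f(y₀) = R(λ) f(y₀)` where `R(λ) = λ(5-λ)`. -/
theorem decimation_forward (lam : ℂ) (hlam : lam ∉ ({2, 5, 6} : Set ℂ))
    (f : GammaV → ℂ) (hf : ∀ i : Fin 7, -laplG f (yv i) = lam * f (yv i)) :
    -laplG1 f = R lam * f y0 := by
  have hlam6 : (6:ℂ) - lam ≠ 0 := by
    intro h
    exact hlam (by right; right; simp only [Set.mem_singleton_iff]; linear_combination -h)
  have e0 : Finset.univ.filter (fun z => adjG y0 z) = ({y1,y2,y3,y4} : Finset GammaV) := by decide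
  have e1 : Finset.univ.filter (fun z => adjG y1 z) = ({x1,y0,y4,y5} : Finset GammaV) := by decide
  have e2 : Finset.univ.filter (fun z => adjG y2 z) = ({x2,y0,y3,y6} : Finset GammaV) := by decide
  have e3 : Finset.univ.filter (fun z => adjG y3 z) = ({x3,y0,y2,y6} : Finset GammaV) := by decide
  have e4 : Finset.univ.filter (fun z => adjG y4 z) = ({x4,y0,y1,y5} : Finset GammaV) := by decide
  have e5 : Finset.univ.filter (fun z => adjG y5 z) = ({x1,x4,y1,y4} : Finset GammaV) := by decide
  have e6 : Finset.univ.filter (fun z => adjG y6 z) = ({x2,x3,y2,y3} : Finset GammaV) := by decide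
  have h0 : -laplG f y0 = lam * f y0 := hf 0; have h1 : -laplG f y1 = lam * f y1 := hf 1; have h2 : -laplG f y2 = lam * f y2 := hf 2; have h3 : -laplG f y3 = lam * f y3 := hf 3
  have h4 : -laplG f y4 = lam * f y4 := hf 4; have h5 : -laplG f y5 = lam * f y5 := hf 5; have h6 : -laplG f y6 = lam * f y6 := hf 6
  simp only [yv, laplG, e0, e1, e2, e3, e4, e5, e6] at h0 h1 h2 h3 h4 h5 h6
  simp [Finset.sum_insert, add_assoc] at h0 h1 h2 h3 h4 h5 h6
  have hS : f y1 + f y2 + f y3 + f y4 = (4 - lam) * f y0 := by linear_combination -h0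
  have hXeq : f x1 + f x2 + f x3 + f x4 =
      (3 - lam) * (f y1 + f y2 + f y3 + f y4) - 4 * f y0 - 2 * (f y5 + f y6) := by
    linear_combination -h1 - h2 - h3 - h4
  have hT : (6 - lam) * (f y5 + f y6) =
      (4 - lam) * (f y1 + f y2 + f y3 + f y4) - 4 * f y0 := by
    linear_combination h5 + h6 - h1 - h2 - h3 - h4
  have hT2 : (6 - lam) * (f y5 + f y6) = (6 - lam) * ((2 - lam) * f y0) := by
    linear_combination hT + (4 - lam) * hS
  have hT3 : f y5 + f y6 = (2 - lam) * f y0 := mul_left_cancel₀ hlam6 hT2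
  simp only [laplG1, R]
  linear_combination -hXeq - (3 - lam) * hS + 2 * hT3


end SGpaper
end
end

section
/- Let λ∈ℂ with λ∉{2,5,6}, and let R(λ)=λ(5−λ). For any prescribed complex values f(x1),f(x2),f(x3),f(x4),f(y0) satisfying −Δ_{(−1)}f(y0)=R(λ) f(y0), there exist unique complex values f(y1),…,f(y6) such that the extended function f on Γ satisfies −Δf(y_i)=λ f(y_i) for all 0≤i≤6. -/
noncomputable section

namespace SGpaper

instance : Fintype GammaV :=
  ⟨{GammaV.x1, GammaV.x2, GammaV.x3, GammaV.x4, GammaV.y0, GammaV.y1, GammaV.y2, GammaV.y3,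
    GammaV.y4, GammaV.y5, GammaV.y6}, fun x => by cases x <;> decide⟩

open GammaV

lemma laplG_y0 (f : GammaV → ℂ) : laplG f y0 = f y1 + f y2 + f y3 + f y4 - 4 * f y0 := by
  unfold laplG
  rw [show Finset.univ.filter (fun z => adjG y0 z) = {y1, y2, y3, y4} from by decide]
  simp [Finset.sum_insert, Finset.mem_insert]; ring
lemma laplG_y1 (f : GammaV → ℂ) : laplG f y1 = f x1 + f y0 + f y4 + f y5 - 4 * f y1 := by
  unfold laplG
  rw [show Finset.univ.filter (fun z => adjG y1 z) = {x1, y0, y4, y5} from by decide]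
  simp [Finset.sum_insert, Finset.mem_insert]; ring
lemma laplG_y2 (f : GammaV → ℂ) : laplG f y2 = f x2 + f y0 + f y3 + f y6 - 4 * f y2 := by
  unfold laplG
  rw [show Finset.univ.filter (fun z => adjG y2 z) = {x2, y0, y3, y6} from by decide]
  simp [Finset.sum_insert, Finset.mem_insert]; ring
lemma laplG_y3 (f : GammaV → ℂ) : laplG f y3 = f x3 + f y0 + f y2 + f y6 - 4 * f y3 := by
  unfold laplG
  rw [show Finset.univ.filter (fun z => adjG y3 z) = {x3, y0, y2, y6} from by decide]
  simp [Finset.sum_insert, Finset.mem_insert]; ring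
lemma laplG_y4 (f : GammaV → ℂ) : laplG f y4 = f x4 + f y0 + f y1 + f y5 - 4 * f y4 := by
  unfold laplG
  rw [show Finset.univ.filter (fun z => adjG y4 z) = {x4, y0, y1, y5} from by decide]
  simp [Finset.sum_insert, Finset.mem_insert]; ring
lemma laplG_y5 (f : GammaV → ℂ) : laplG f y5 = f x1 + f x4 + f y1 + f y4 - 4 * f y5 := by
  unfold laplG
  rw [show Finset.univ.filter (fun z => adjG y5 z) = {x1, x4, y1, y4} from by decide]
  simp [Finset.sum_insert, Finset.mem_insert]; ring
lemma laplG_y6 (f : GammaV → ℂ) : laplG f y6 = f x2 + f x3 + f y2 + f y3 - 4 * f y6 := by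
  unfold laplG
  rw [show Finset.univ.filter (fun z => adjG y6 z) = {x2, x3, y2, y3} from by decide]
  simp [Finset.sum_insert, Finset.mem_insert]; ring


open GammaV in
/-- Spectral decimation, extension. Let `λ ∉ {2,5,6}`. For any prescribed
values `a = f(x₁), b = f(x₂), c = f(x₃), d = f(x₄), e = f(y₀)` with
`-Δ_{(-1)}f(y₀) = R(λ) f(y₀)`, there is a unique extension `f : Γ → ℂ` satisfying
`-Δf(yᵢ) = λ f(yᵢ)` for all `0 ≤ i ≤ 6`. -/
theorem decimation_extension (lam : ℂ) (hlam : lam ∉ ({2, 5, 6} : Set ℂ))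
    (a b c d e : ℂ) (h : -(a + b + c + d - 4 * e) = R lam * e) :
    ∃! f : GammaV → ℂ,
      (f x1 = a ∧ f x2 = b ∧ f x3 = c ∧ f x4 = d ∧ f y0 = e) ∧
      ∀ i : Fin 7, -laplG f (yv i) = lam * f (yv i) := by
  simp only [Set.mem_insert_iff, Set.mem_singleton_iff, not_or] at hlam
  obtain ⟨h2, h5, h6⟩ := hlam
  have hD : (2 - lam) * (5 - lam) ≠ 0 := by
    apply mul_ne_zero <;> intro hh <;> [exact h2 (by linear_combination -hh);
      exact h5 (by linear_combination -hh)]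
  rw [R] at h
  refine ⟨fun v => match v with
    | x1 => a | x2 => b | x3 => c | x4 => d | y0 => e
    | y1 => ((4-lam)*(a+e)+2*d)/((2-lam)*(5-lam))
    | y4 => ((4-lam)*(d+e)+2*a)/((2-lam)*(5-lam))
    | y5 => ((4-lam)*(a+d)+2*e)/((2-lam)*(5-lam))
    | y2 => ((4-lam)*(e+b)+2*c)/((2-lam)*(5-lam))
    | y3 => ((4-lam)*(e+c)+2*b)/((2-lam)*(5-lam))
    | y6 => ((4-lam)*(b+c)+2*e)/((2-lam)*(5-lam)), ⟨⟨rfl, rfl, rfl, rfl, rfl⟩, ?_⟩, ?_⟩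
  · intro i
    fin_cases i
    · simp only [yv, laplG_y0]
      field_simp
      linear_combination (6 - lam) * h
    all_goals
      simp only [yv, laplG_y1, laplG_y2, laplG_y3, laplG_y4, laplG_y5, laplG_y6]
      field_simp
      ring
  · rintro g ⟨⟨hg1, hg2, hg3, hg4, hg0⟩, hgy⟩
    have E1 := hgy 1; have E2 := hgy 4; have E3 := hgy 5
    have F1 := hgy 2; have F2 := hgy 3; have F3 := hgy 6
    simp only [yv, laplG_y1, laplG_y2, laplG_y3, laplG_y4, laplG_y5, laplG_y6,
      hg1, hg2, hg3, hg4, hg0] at E1 E2 E3 F1 F2 F3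
    funext v
    cases v
    · exact hg1
    · exact hg2
    · exact hg3
    · exact hg4
    · exact hg0
    · show g y1 = _; rw [eq_div_iff hD]; linear_combination (3 - lam) * E1 + E2 + E3
    · show g y2 = _; rw [eq_div_iff hD]; linear_combination (3 - lam) * F1 + F2 + F3
    · show g y3 = _; rw [eq_div_iff hD]; linear_combination F1 + (3 - lam) * F2 + F3
    · show g y4 = _; rw [eq_div_iff hD]; linear_combination E1 + (3 - lam) * E2 + E3
    · show g y5 = _; rw [eq_div_iff hD]; linear_combination E1 + E2 + (3 - lam) * E3
    · show g y6 = _; rw [eq_div_iff hD]; linear_combination F1 + F2 + (3 - lam) * F3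


end SGpaper
end
end
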